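/- Let ℓ be an odd prime, let f : 𝔽_{ℓ²} → M₂(𝔽_ℓ) be an injective 𝔽_ℓ-algebra homomorphism from the field with ℓ² elements into the 2×2 matrix algebra, and let T = f(𝔽_{ℓ²}^×) ⊆ GL₂(𝔽_ℓ) be the resulting non-split torus. Let G be a subgroup of the normalizer of T in GL₂(𝔽_ℓ) such that ℓ does not divide |G| and det : G → 𝔽_ℓ^× is surjective. Then (ℓ − 1) · |M_G| ≤ 2 · |G|. -/

import Mathlib

open Matrix
open scoped MatrixGroups

section AuxMatrix

lemma det_sub_one_fin_two {K : Type*} [CommRing K] (A : Matrix (Fin 2) (Fin 2) K) :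
    Matrix.det (A - 1) = Matrix.det A - Matrix.trace A + 1 := by
  simp [Matrix.det_fin_two, Matrix.trace_fin_two, Matrix.sub_apply, Matrix.one_apply]
  ring

lemma det_add_one_fin_two {K : Type*} [CommRing K] (A : Matrix (Fin 2) (Fin 2) K) :
    Matrix.det (A + 1) = Matrix.det A + Matrix.trace A + 1 := by
  simp [Matrix.det_fin_two, Matrix.trace_fin_two, Matrix.add_apply, Matrix.one_apply]
  ring

lemma trace_eq_zero_of_anticomm {K : Type*} [Field K] (h2 : (2:K) ≠ 0)
    (A B Bi : Matrix (Fin 2) (Fin 2) K) (hB : B * Bi = 1) (hB' : Bi * B = 1)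
    (h : A * B = -(B * A)) : Matrix.trace A = 0 := by
  have key : Matrix.trace A = -Matrix.trace A := by
    calc Matrix.trace A = Matrix.trace (A * B * Bi) := by rw [mul_assoc, hB, mul_one]
    _ = Matrix.trace (-(B * A) * Bi) := by rw [h]
    _ = -Matrix.trace (B * (A * Bi)) := by rw [neg_mul, Matrix.trace_neg, mul_assoc]
    _ = -Matrix.trace ((A * Bi) * B) := by rw [Matrix.trace_mul_comm]
    _ = -Matrix.trace A := by rw [mul_assoc, hB', mul_one]
  have h0 : (2:K) * Matrix.trace A = 0 := by linear_combination key
  rcases mul_eq_zero.mp h0 with h' | h'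
  · exact absurd h' h2
  · exact h'

lemma commutant_fin_two {K : Type*} [Field K] (A B : Matrix (Fin 2) (Fin 2) K)
    (h : A * B = B * A) (hB : ∀ c : K, B ≠ c • (1 : Matrix (Fin 2) (Fin 2) K)) :
    ∃ s t : K, A = s • (1 : Matrix (Fin 2) (Fin 2) K) + t • B := by
  have e00 := congrFun (congrFun h 0) 0
  have e01 := congrFun (congrFun h 0) 1
  have e10 := congrFun (congrFun h 1) 0
  have e11 := congrFun (congrFun h 1) 1
  simp [Matrix.mul_apply, Fin.sum_univ_two] at e00 e01 e10 e11
  by_cases hb : B 0 1 = 0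
  · by_cases hc : B 1 0 = 0
    · have had : B 0 0 - B 1 1 ≠ 0 := by
        intro hd
        refine hB (B 1 1) ?_
        ext i j
        fin_cases i <;> fin_cases j <;>
          simp [Matrix.smul_apply, Matrix.one_apply, hb, hc, sub_eq_zero.mp hd]
      have hq : A 0 1 = 0 := by
        rcases mul_eq_zero.mp (show A 0 1 * (B 1 1 - B 0 0) = 0 by
          linear_combination e01 - A 0 0 * hb + A 1 1 * hb) with h' | h'
        · exact h'
        · exact absurd (by linear_combination -h') had
      have hr : A 1 0 = 0 := by
        rcases mul_eq_zero.mp (show A 1 0 * (B 0 0 - B 1 1) = 0 by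
          linear_combination e10 + A 0 0 * hc - A 1 1 * hc) with h' | h'
        · exact h'
        · exact absurd h' had
      refine ⟨A 0 0 - ((A 0 0 - A 1 1)/(B 0 0 - B 1 1)) * B 0 0,
        (A 0 0 - A 1 1)/(B 0 0 - B 1 1), ?_⟩
      ext i j
      fin_cases i <;> fin_cases j <;>
        simp [Matrix.smul_apply, Matrix.one_apply, Matrix.add_apply, hq, hr, hb, hc]
      all_goals field_simp
      all_goals ring
    · refine ⟨A 0 0 - (A 1 0 / B 1 0) * B 0 0, A 1 0 / B 1 0, ?_⟩
      ext i j
      fin_cases i <;> fin_cases j <;>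
        simp [Matrix.smul_apply, Matrix.one_apply, Matrix.add_apply]
      all_goals field_simp
      · linear_combination e00
      · linear_combination e10
  · refine ⟨A 0 0 - (A 0 1 / B 0 1) * B 0 0, A 0 1 / B 0 1, ?_⟩
    ext i j
    fin_cases i <;> fin_cases j <;>
      simp [Matrix.smul_apply, Matrix.one_apply, Matrix.add_apply]
    all_goals field_simp
    · linear_combination -e00
    · linear_combination -e01

end AuxMatrix

section AuxField

variable {ℓ : ℕ} [Fact ℓ.Prime]

lemma not_dvd_two (hodd : Odd ℓ) : ¬ ℓ ∣ 2 := by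
  intro hdvd
  have := (Nat.prime_dvd_prime_iff_eq (Fact.out : ℓ.Prime) Nat.prime_two).mp hdvd
  rw [this] at hodd
  simp [Nat.odd_iff] at hodd

lemma two_ne_zero_char (K : Type*) [AddGroupWithOne K] [CharP K ℓ] (hodd : Odd ℓ) :
    (2 : K) ≠ 0 := by
  intro h
  refine not_dvd_two hodd ((CharP.cast_eq_zero_iff K ℓ 2).mp ?_)
  exact_mod_cast h

lemma aux_degree :
    (Polynomial.X ^ ℓ - Polynomial.X : Polynomial (GaloisField ℓ 2)).natDegree = ℓ := by
  have h1 : (1:ℕ) < ℓ := (Fact.out : ℓ.Prime).one_lt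
  rw [Polynomial.natDegree_sub_eq_left_of_natDegree_lt] <;>
    simp [Polynomial.natDegree_X_pow, Polynomial.natDegree_X]
  omega

lemma galois_finite : Finite (GaloisField ℓ 2) := by
  have h := GaloisField.card ℓ 2 (by norm_num)
  have hpos : 0 < ℓ := (Fact.out : ℓ.Prime).pos
  exact Nat.finite_of_card_ne_zero (by rw [h]; positivity)

lemma aux_fixed (x : GaloisField ℓ 2) (hx : x ^ ℓ = x) :
    ∃ c : ZMod ℓ, algebraMap (ZMod ℓ) (GaloisField ℓ 2) c = x := by
  classical
  set p : Polynomial (GaloisField ℓ 2) := Polynomial.X ^ ℓ - Polynomial.X with hp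
  have hdeg : p.natDegree = ℓ := aux_degree
  have hℓpos : 0 < ℓ := (Fact.out : ℓ.Prime).pos
  have hp0 : p ≠ 0 := fun h => by rw [h] at hdeg; simp at hdeg; omega
  have hroot : ∀ y : GaloisField ℓ 2, y ^ ℓ = y → y ∈ p.roots.toFinset := by
    intro y hy
    simp only [Multiset.mem_toFinset, Polynomial.mem_roots hp0, Polynomial.IsRoot.def]
    simp [hp, hy]
  have hinj : Function.Injective (algebraMap (ZMod ℓ) (GaloisField ℓ 2)) :=
    (algebraMap (ZMod ℓ) (GaloisField ℓ 2)).injective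
  have hsub : (Finset.univ.image (algebraMap (ZMod ℓ) (GaloisField ℓ 2))) ⊆ p.roots.toFinset := by
    intro z hz
    simp only [Finset.mem_image] at hz
    obtain ⟨c, _, rfl⟩ := hz
    refine hroot _ ?_
    rw [← map_pow, ZMod.pow_card]
  have hcard1 : (Finset.univ.image (algebraMap (ZMod ℓ) (GaloisField ℓ 2))).card = ℓ := by
    rw [Finset.card_image_of_injective _ hinj, Finset.card_univ, ZMod.card]
  have hcard2 : p.roots.toFinset.card ≤ ℓ := by
    calc p.roots.toFinset.card ≤ Multiset.card p.roots := Multiset.toFinset_card_le _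
    _ ≤ p.natDegree := Polynomial.card_roots' p
    _ = ℓ := hdeg
  have heq := Finset.eq_of_subset_of_card_le hsub (by omega)
  have hx' : x ∈ p.roots.toFinset := hroot x hx
  rw [← heq] at hx'
  simp only [Finset.mem_image] at hx'
  obtain ⟨c, _, hc⟩ := hx'
  exact ⟨c, hc⟩

lemma aux_delta : ∃ δ : GaloisField ℓ 2, δ ≠ 0 ∧ δ ^ ℓ = -δ := by
  classical
  letI : Finite (GaloisField ℓ 2) := galois_finite
  letI : Fintype (GaloisField ℓ 2) := Fintype.ofFinite _
  have hℓpos : 0 < ℓ := (Fact.out : ℓ.Prime).pos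
  have hβ : ∃ β : GaloisField ℓ 2, β ^ ℓ ≠ β := by
    by_contra hall
    push_neg at hall
    set p : Polynomial (GaloisField ℓ 2) := Polynomial.X ^ ℓ - Polynomial.X with hp
    have hdeg : p.natDegree = ℓ := aux_degree
    have hp0 : p ≠ 0 := fun h => by rw [h] at hdeg; simp at hdeg; omega
    have hsub : (Finset.univ : Finset (GaloisField ℓ 2)) ⊆ p.roots.toFinset := by
      intro z _
      simp only [Multiset.mem_toFinset, Polynomial.mem_roots hp0, Polynomial.IsRoot.def]
      simp [hp, hall z]
    have hcard2 : p.roots.toFinset.card ≤ ℓ := by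
      calc p.roots.toFinset.card ≤ Multiset.card p.roots := Multiset.toFinset_card_le _
      _ ≤ p.natDegree := Polynomial.card_roots' p
      _ = ℓ := hdeg
    have hcard1 : (Finset.univ : Finset (GaloisField ℓ 2)).card = ℓ ^ 2 := by
      rw [Finset.card_univ, ← Nat.card_eq_fintype_card, GaloisField.card ℓ 2 (by norm_num)]
    have := Finset.card_le_card hsub
    rw [hcard1] at this
    nlinarith [(Fact.out : ℓ.Prime).one_lt]
  obtain ⟨β, hβ⟩ := hβ
  refine ⟨β - β ^ ℓ, sub_ne_zero.mpr (fun h => hβ h.symm), ?_⟩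
  have hchar : (β - β ^ ℓ) ^ ℓ = β ^ ℓ - (β ^ ℓ) ^ ℓ := sub_pow_char β (β ^ ℓ)
  have hcardF : Fintype.card (GaloisField ℓ 2) = ℓ ^ 2 := by
    rw [← Nat.card_eq_fintype_card, GaloisField.card ℓ 2 (by norm_num)]
  have hββ : (β ^ ℓ) ^ ℓ = β := by
    rw [← pow_mul, ← pow_two]
    calc β ^ ℓ ^ 2 = β ^ Fintype.card (GaloisField ℓ 2) := by rw [hcardF]
    _ = β := FiniteField.pow_card β
  rw [hchar, hββ]
  ring

end AuxField
section Torus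

variable {ℓ : ℕ} [Fact ℓ.Prime]

/-- The nonsplit torus as subgroup of GL₂. -/
noncomputable def Tor (f : GaloisField ℓ 2 →ₐ[ZMod ℓ] Matrix (Fin 2) (Fin 2) (ZMod ℓ)) :
    Subgroup (GL (Fin 2) (ZMod ℓ)) :=
  (Units.map (f.toMonoidHom : GaloisField ℓ 2 →* Matrix (Fin 2) (Fin 2) (ZMod ℓ))).range

variable (f : GaloisField ℓ 2 →ₐ[ZMod ℓ] Matrix (Fin 2) (Fin 2) (ZMod ℓ))

lemma mem_T_commute (δ : GaloisField ℓ 2) (A : GL (Fin 2) (ZMod ℓ)) (hmem : A ∈ Tor f) :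
    (A : Matrix (Fin 2) (Fin 2) (ZMod ℓ)) * f δ = f δ * A := by
  obtain ⟨x, rfl⟩ := hmem
  show (f x.val) * f δ = f δ * f x.val
  rw [← _root_.map_mul, ← _root_.map_mul, mul_comm]

variable (hf : Function.Injective f) (hodd : Odd ℓ)
  (δ : GaloisField ℓ 2) (hδ0 : δ ≠ 0) (hδl : δ ^ ℓ = -δ)

include hf hodd hδ0 hδl

lemma fdelta_nonscalar (c : ZMod ℓ) :
    f δ ≠ c • (1 : Matrix (Fin 2) (Fin 2) (ZMod ℓ)) := by
  intro h
  have h2 : f δ = f (algebraMap (ZMod ℓ) (GaloisField ℓ 2) c) := by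
    rw [AlgHom.commutes, Algebra.algebraMap_eq_smul_one, h]
  have hδc : δ = algebraMap (ZMod ℓ) (GaloisField ℓ 2) c := hf h2
  have hfix : δ ^ ℓ = δ := by
    rw [hδc, ← _root_.map_pow, ZMod.pow_card]
  rw [hδl] at hfix
  have h2δ : (2 : GaloisField ℓ 2) * δ = 0 := by linear_combination -hfix
  rcases mul_eq_zero.mp h2δ with h' | h'
  · exact two_ne_zero_char (GaloisField ℓ 2) hodd h'
  · exact hδ0 h'

lemma commute_mem_T (A : GL (Fin 2) (ZMod ℓ))
    (hc : (A : Matrix (Fin 2) (Fin 2) (ZMod ℓ)) * f δ = f δ * A) :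
    A ∈ Tor f := by
  obtain ⟨s, t, hA⟩ := commutant_fin_two (A : Matrix (Fin 2) (Fin 2) (ZMod ℓ)) (f δ) hc
    (fdelta_nonscalar f hf hodd δ hδ0 hδl)
  set x : GaloisField ℓ 2 :=
    algebraMap (ZMod ℓ) (GaloisField ℓ 2) s + algebraMap (ZMod ℓ) (GaloisField ℓ 2) t * δ with hx
  have hfx : f x = A := by
    rw [hx, _root_.map_add, _root_.map_mul, AlgHom.commutes, AlgHom.commutes, hA,
      Algebra.algebraMap_eq_smul_one, Algebra.algebraMap_eq_smul_one, smul_mul_assoc, one_mul]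
  have hx0 : x ≠ 0 := by
    intro h0
    rw [h0, _root_.map_zero] at hfx
    have h1 : (A : Matrix (Fin 2) (Fin 2) (ZMod ℓ)) * ((A⁻¹ : GL (Fin 2) (ZMod ℓ)) :
        Matrix (Fin 2) (Fin 2) (ZMod ℓ)) = 1 := A.mul_inv
    rw [← hfx] at h1
    simp at h1
  exact ⟨Units.mk0 x hx0, Units.ext (by simpa using hfx)⟩

-- no element both commutes and anticommutes
lemma not_comm_anticomm (A : GL (Fin 2) (ZMod ℓ))
    (hc : (A : Matrix (Fin 2) (Fin 2) (ZMod ℓ)) * f δ = f δ * A)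
    (ha : (A : Matrix (Fin 2) (Fin 2) (ZMod ℓ)) * f δ = -(f δ * A)) : False := by
  have h0 : (2 : ZMod ℓ) • ((f δ : Matrix (Fin 2) (Fin 2) (ZMod ℓ)) * A) = 0 := by
    rw [two_smul]
    rw [hc] at ha
    linear_combination (norm := abel) ha
  rcases smul_eq_zero.mp h0 with h' | h'
  · exact two_ne_zero_char (ZMod ℓ) hodd h'
  · -- f δ * A = 0 is impossible
    have hinv' : f δ⁻¹ * f δ = 1 := by rw [← _root_.map_mul, inv_mul_cancel₀ hδ0, _root_.map_one]
    have e1 : f δ⁻¹ * ((f δ * (A : Matrix (Fin 2) (Fin 2) (ZMod ℓ))) *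
        ((A⁻¹ : GL (Fin 2) (ZMod ℓ)) : Matrix (Fin 2) (Fin 2) (ZMod ℓ))) = 1 := by
      rw [← mul_assoc, ← mul_assoc, hinv', one_mul, A.mul_inv]
    have e2 : f δ⁻¹ * ((f δ * (A : Matrix (Fin 2) (Fin 2) (ZMod ℓ))) *
        ((A⁻¹ : GL (Fin 2) (ZMod ℓ)) : Matrix (Fin 2) (Fin 2) (ZMod ℓ))) = 0 := by
      rw [h', zero_mul, mul_zero]
    exact one_ne_zero (e1.symm.trans e2)

lemma dichotomy (A : GL (Fin 2) (ZMod ℓ)) (hn : A ∈ Subgroup.normalizer (Tor f : Set (GL (Fin 2) (ZMod ℓ)))) :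
    (A : Matrix (Fin 2) (Fin 2) (ZMod ℓ)) * f δ = f δ * A ∨
    (A : Matrix (Fin 2) (Fin 2) (ZMod ℓ)) * f δ = -(f δ * A) := by
  classical
  have hδu : Units.map (f.toMonoidHom : GaloisField ℓ 2 →* Matrix (Fin 2) (Fin 2) (ZMod ℓ))
      (Units.mk0 δ hδ0) ∈ Tor f := ⟨Units.mk0 δ hδ0, rfl⟩
  have hconj := (Subgroup.mem_normalizer_iff.mp hn _).mp hδu
  obtain ⟨y, hy⟩ := hconj
  have hyv : f y.val = (A : Matrix (Fin 2) (Fin 2) (ZMod ℓ)) * f δ *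
      ((A⁻¹ : GL (Fin 2) (ZMod ℓ)) : Matrix (Fin 2) (Fin 2) (ZMod ℓ)) := by
    have := congrArg Units.val hy
    simpa using this
  -- δ² is fixed by x ↦ x^ℓ, hence a scalar
  obtain ⟨c, hc⟩ := aux_fixed (δ ^ 2) (by
    rw [← pow_mul, mul_comm, pow_mul, hδl]
    ring)
  have hscalar : f (δ ^ 2) = c • (1 : Matrix (Fin 2) (Fin 2) (ZMod ℓ)) := by
    rw [← hc, AlgHom.commutes, Algebra.algebraMap_eq_smul_one]
  have hysq : f (y.val ^ 2) = f (δ ^ 2) := by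
    have hAA : ((A⁻¹ : GL (Fin 2) (ZMod ℓ)) : Matrix (Fin 2) (Fin 2) (ZMod ℓ)) *
        (A : Matrix (Fin 2) (Fin 2) (ZMod ℓ)) = 1 := A.inv_mul
    have hAA' : (A : Matrix (Fin 2) (Fin 2) (ZMod ℓ)) *
        ((A⁻¹ : GL (Fin 2) (ZMod ℓ)) : Matrix (Fin 2) (Fin 2) (ZMod ℓ)) = 1 := A.mul_inv
    calc f (y.val ^ 2) = f y.val * f y.val := by rw [pow_two, _root_.map_mul]
    _ = (A : Matrix (Fin 2) (Fin 2) (ZMod ℓ)) * (f δ * (((A⁻¹ : GL (Fin 2) (ZMod ℓ)) :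
          Matrix (Fin 2) (Fin 2) (ZMod ℓ)) * ((A : Matrix (Fin 2) (Fin 2) (ZMod ℓ)))) * f δ) *
          ((A⁻¹ : GL (Fin 2) (ZMod ℓ)) : Matrix (Fin 2) (Fin 2) (ZMod ℓ)) := by
        rw [hyv]; simp only [mul_assoc]
    _ = (A : Matrix (Fin 2) (Fin 2) (ZMod ℓ)) * f (δ ^ 2) *
          ((A⁻¹ : GL (Fin 2) (ZMod ℓ)) : Matrix (Fin 2) (Fin 2) (ZMod ℓ)) := by
        rw [hAA, mul_one, pow_two, _root_.map_mul]
    _ = c • ((A : Matrix (Fin 2) (Fin 2) (ZMod ℓ)) *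
          ((A⁻¹ : GL (Fin 2) (ZMod ℓ)) : Matrix (Fin 2) (Fin 2) (ZMod ℓ))) := by
        rw [hscalar]; rw [Matrix.mul_smul, Matrix.smul_mul, mul_one]
    _ = f (δ ^ 2) := by rw [hAA', hscalar]
  have hy2 : y.val ^ 2 = δ ^ 2 := hf hysq
  have hpm : y.val = δ ∨ y.val = -δ := by
    have : (y.val - δ) * (y.val + δ) = 0 := by linear_combination hy2
    rcases mul_eq_zero.mp this with h' | h'
    · left; linear_combination h'
    · right; linear_combination h'
  rcases hpm with h' | h'
  · left
    rw [h'] at hyv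
    calc (A : Matrix (Fin 2) (Fin 2) (ZMod ℓ)) * f δ
        = (A : Matrix (Fin 2) (Fin 2) (ZMod ℓ)) * f δ * (((A⁻¹ : GL (Fin 2) (ZMod ℓ)) :
          Matrix (Fin 2) (Fin 2) (ZMod ℓ)) * (A : Matrix (Fin 2) (Fin 2) (ZMod ℓ))) := by
          rw [A.inv_mul, mul_one]
    _ = f δ * A := by rw [← mul_assoc, ← hyv]
  · right
    rw [h', _root_.map_neg] at hyv
    have : -(f δ) = (A : Matrix (Fin 2) (Fin 2) (ZMod ℓ)) * f δ *
        ((A⁻¹ : GL (Fin 2) (ZMod ℓ)) : Matrix (Fin 2) (Fin 2) (ZMod ℓ)) := hyv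
    calc (A : Matrix (Fin 2) (Fin 2) (ZMod ℓ)) * f δ
        = (A : Matrix (Fin 2) (Fin 2) (ZMod ℓ)) * f δ * (((A⁻¹ : GL (Fin 2) (ZMod ℓ)) :
          Matrix (Fin 2) (Fin 2) (ZMod ℓ)) * (A : Matrix (Fin 2) (Fin 2) (ZMod ℓ))) := by
          rw [A.inv_mul, mul_one]
    _ = -(f δ) * A := by rw [← mul_assoc, ← this]
    _ = -(f δ * A) := by rw [neg_mul]

end Torus
section Torus2

variable {ℓ : ℕ} [Fact ℓ.Prime]
  (f : GaloisField ℓ 2 →ₐ[ZMod ℓ] Matrix (Fin 2) (Fin 2) (ZMod ℓ))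

-- units from f of nonzero field elements
lemma f_isUnit (x : GaloisField ℓ 2) (hx : x ≠ 0) : IsUnit (f x) := by
  refine ⟨⟨f x, f x⁻¹, ?_, ?_⟩, rfl⟩
  · rw [← _root_.map_mul, mul_inv_cancel₀ hx, _root_.map_one]
  · rw [← _root_.map_mul, inv_mul_cancel₀ hx, _root_.map_one]

lemma fx_mem_T (x : GaloisField ℓ 2) (hx : x ≠ 0) (A : GL (Fin 2) (ZMod ℓ))
    (hfx : f x = (A : Matrix (Fin 2) (Fin 2) (ZMod ℓ))) : A ∈ Tor f :=
  ⟨Units.mk0 x hx, Units.ext (by simpa using hfx)⟩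

lemma one_mem_T : (1 : GL (Fin 2) (ZMod ℓ)) ∈ Tor f :=
  fx_mem_T f 1 one_ne_zero 1 (by simp)

lemma neg_one_mem_T : (-1 : GL (Fin 2) (ZMod ℓ)) ∈ Tor f :=
  fx_mem_T f (-1) (by simp) (-1) (by simp)

-- an element of T with eigenvalue ±1 is ±1
lemma T_pm (hf : Function.Injective f) (A : GL (Fin 2) (ZMod ℓ)) (hmem : A ∈ Tor f)
    (he : Matrix.det ((A : Matrix (Fin 2) (Fin 2) (ZMod ℓ)) - 1) = 0 ∨
          Matrix.det ((A : Matrix (Fin 2) (Fin 2) (ZMod ℓ)) + 1) = 0) :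
    (A : Matrix (Fin 2) (Fin 2) (ZMod ℓ)) = 1 ∨
    (A : Matrix (Fin 2) (Fin 2) (ZMod ℓ)) = -1 := by
  obtain ⟨x, rfl⟩ := hmem
  have hval : ((Units.map (f.toMonoidHom : GaloisField ℓ 2 →* Matrix (Fin 2) (Fin 2) (ZMod ℓ)) x :
      GL (Fin 2) (ZMod ℓ)) : Matrix (Fin 2) (Fin 2) (ZMod ℓ)) = f x.val := by simp
  rcases he with h | h
  · left
    rw [hval] at h ⊢
    have hsub : f x.val - 1 = f (x.val - 1) := by
      rw [_root_.map_sub, _root_.map_one]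
    rw [hsub] at h
    by_cases hx1 : x.val = 1
    · rw [hx1, _root_.map_one]
    · exfalso
      have hu : (x.val - 1) ≠ 0 := sub_ne_zero.mpr hx1
      have : IsUnit (f (x.val - 1)) := f_isUnit f _ hu
      have hdet := (Matrix.isUnit_iff_isUnit_det _).mp this
      rw [h] at hdet
      exact hdet.ne_zero rfl
  · right
    rw [hval] at h ⊢
    have hsub : f x.val + 1 = f (x.val + 1) := by
      rw [_root_.map_add, _root_.map_one]
    rw [hsub] at h
    by_cases hx1 : x.val = -1
    · rw [hx1]; simp
    · exfalso
      have hu : (x.val + 1) ≠ 0 := fun h0 => hx1 (by linear_combination h0)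
      have : IsUnit (f (x.val + 1)) := f_isUnit f _ hu
      have hdet := (Matrix.isUnit_iff_isUnit_det _).mp this
      rw [h] at hdet
      exact hdet.ne_zero rfl

-- product of two anticommuting elements commutes
lemma coset_prod (δ : GaloisField ℓ 2) (A A' : GL (Fin 2) (ZMod ℓ))
    (hA : (A : Matrix (Fin 2) (Fin 2) (ZMod ℓ)) * f δ = -(f δ * A))
    (hA' : (A' : Matrix (Fin 2) (Fin 2) (ZMod ℓ)) * f δ = -(f δ * A')) :
    ((A'⁻¹ * A : GL (Fin 2) (ZMod ℓ)) : Matrix (Fin 2) (Fin 2) (ZMod ℓ)) * f δ =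
      f δ * ((A'⁻¹ * A : GL (Fin 2) (ZMod ℓ)) : Matrix (Fin 2) (Fin 2) (ZMod ℓ)) := by
  have hv : ((A'⁻¹ * A : GL (Fin 2) (ZMod ℓ)) : Matrix (Fin 2) (Fin 2) (ZMod ℓ)) =
      ((A'⁻¹ : GL (Fin 2) (ZMod ℓ)) : Matrix (Fin 2) (Fin 2) (ZMod ℓ)) * A := rfl
  set N : Matrix (Fin 2) (Fin 2) (ZMod ℓ) := ((A'⁻¹ : GL (Fin 2) (ZMod ℓ)) :
    Matrix (Fin 2) (Fin 2) (ZMod ℓ)) with hN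
  have h1 : (A' : Matrix (Fin 2) (Fin 2) (ZMod ℓ)) * N = 1 := A'.mul_inv
  have h2 : N * (A' : Matrix (Fin 2) (Fin 2) (ZMod ℓ)) = 1 := A'.inv_mul
  have hBN : f δ * N = -(N * f δ) := by
    have : N * ((A' : Matrix (Fin 2) (Fin 2) (ZMod ℓ)) * f δ) * N =
        N * (-(f δ * A')) * N := by rw [hA']
    calc f δ * N = (N * (A' : Matrix (Fin 2) (Fin 2) (ZMod ℓ))) * (f δ * N) := by
          rw [h2, one_mul]
    _ = N * ((A' : Matrix (Fin 2) (Fin 2) (ZMod ℓ)) * f δ) * N := by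
          simp only [mul_assoc]
    _ = N * (-(f δ * A')) * N := this
    _ = -(N * f δ * ((A' : Matrix (Fin 2) (Fin 2) (ZMod ℓ)) * N)) := by
          simp only [mul_neg, neg_mul, mul_assoc]
    _ = -(N * f δ) := by rw [h1, mul_one]
  rw [hv]
  calc N * (A : Matrix (Fin 2) (Fin 2) (ZMod ℓ)) * f δ
      = N * ((A : Matrix (Fin 2) (Fin 2) (ZMod ℓ)) * f δ) := by rw [mul_assoc]
  _ = N * (-(f δ * A)) := by rw [hA]
  _ = -(N * f δ) * A := by simp only [mul_neg, neg_mul, mul_assoc]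
  _ = (f δ * N) * A := by rw [hBN]
  _ = f δ * (N * A) := by rw [mul_assoc]

end Torus2
section Classify

variable {ℓ : ℕ} [Fact ℓ.Prime]
  (f : GaloisField ℓ 2 →ₐ[ZMod ℓ] Matrix (Fin 2) (Fin 2) (ZMod ℓ))

lemma one_ne_neg_one_mat (hodd : Odd ℓ) :
    (1 : Matrix (Fin 2) (Fin 2) (ZMod ℓ)) ≠ -1 := by
  intro h
  have := congrFun (congrFun h 0) 0
  simp [Matrix.one_apply, Matrix.neg_apply] at this
  have h2 : (2 : ZMod ℓ) = 0 := by linear_combination this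
  exact two_ne_zero_char (ZMod ℓ) hodd h2

lemma classify (hf : Function.Injective f) (hodd : Odd ℓ)
    (δ : GaloisField ℓ 2) (hδ0 : δ ≠ 0) (hδl : δ ^ ℓ = -δ)
    (A : GL (Fin 2) (ZMod ℓ)) (hn : A ∈ Subgroup.normalizer (Tor f : Set (GL (Fin 2) (ZMod ℓ))))
    (he : Matrix.det ((A : Matrix (Fin 2) (Fin 2) (ZMod ℓ)) - 1) = 0 ∨
          Matrix.det ((A : Matrix (Fin 2) (Fin 2) (ZMod ℓ)) + 1) = 0) :
    ((A : Matrix (Fin 2) (Fin 2) (ZMod ℓ)) = 1 ∨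
     (A : Matrix (Fin 2) (Fin 2) (ZMod ℓ)) = -1) ∨
    (((A : Matrix (Fin 2) (Fin 2) (ZMod ℓ)) * f δ = -(f δ * A)) ∧
      Matrix.det (A : Matrix (Fin 2) (Fin 2) (ZMod ℓ)) = -1) := by
  rcases dichotomy f hf hodd δ hδ0 hδl A hn with hc | ha
  · exact Or.inl (T_pm f hf A (commute_mem_T f hf hodd δ hδ0 hδl A hc) he)
  · right
    refine ⟨ha, ?_⟩
    have h1 : f δ * f δ⁻¹ = 1 := by
      rw [← _root_.map_mul, mul_inv_cancel₀ hδ0, _root_.map_one]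
    have h2 : f δ⁻¹ * f δ = 1 := by
      rw [← _root_.map_mul, inv_mul_cancel₀ hδ0, _root_.map_one]
    have htr : Matrix.trace (A : Matrix (Fin 2) (Fin 2) (ZMod ℓ)) = 0 :=
      trace_eq_zero_of_anticomm (two_ne_zero_char (ZMod ℓ) hodd) _ (f δ) (f δ⁻¹) h1 h2 ha
    rcases he with h | h
    · rw [det_sub_one_fin_two, htr] at h; linear_combination h
    · rw [det_add_one_fin_two, htr] at h; linear_combination h

end Classify
set_option maxHeartbeats 2000000 in
/-- Let `ℓ` be an odd prime, `f : 𝔽_{ℓ²} → M₂(𝔽_ℓ)` an injective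
`𝔽_ℓ`-algebra homomorphism, and `T = f(𝔽_{ℓ²}ˣ) ⊆ GL₂(𝔽_ℓ)` the resulting non-split
torus.  Let `G` be a subgroup of the normalizer of `T` such that `ℓ ∤ |G|` and
`det : G → 𝔽_ℓˣ` is surjective.  Then `(ℓ − 1) * |M_G| ≤ 2 * |G|`. -/
theorem gl2_nonsplit_normalizer_eigenvalue_pm_one_count (ℓ : ℕ) [Fact ℓ.Prime] (hodd : Odd ℓ)
    (f : GaloisField ℓ 2 →ₐ[ZMod ℓ] Matrix (Fin 2) (Fin 2) (ZMod ℓ))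
    (hf : Function.Injective f)
    (G : Subgroup (GL (Fin 2) (ZMod ℓ)))
    (hG : G ≤ Subgroup.normalizer
      ((Units.map (f.toMonoidHom : GaloisField ℓ 2 →* Matrix (Fin 2) (Fin 2) (ZMod ℓ))).range))
    (hord : ¬ ℓ ∣ Nat.card G)
    (hdet : Function.Surjective
      (fun g : G => Matrix.GeneralLinearGroup.det (g : GL (Fin 2) (ZMod ℓ)))) :
    (ℓ - 1) * Nat.card {A : GL (Fin 2) (ZMod ℓ) // A ∈ G ∧
        (Matrix.det ((A : Matrix (Fin 2) (Fin 2) (ZMod ℓ)) - 1) = 0 ∨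
         Matrix.det ((A : Matrix (Fin 2) (Fin 2) (ZMod ℓ)) + 1) = 0)} ≤
      2 * Nat.card G := by
  classical
  obtain ⟨δ, hδ0, hδl⟩ := aux_delta (ℓ := ℓ)
  have hG' : G ≤ Subgroup.normalizer (Tor f : Set (GL (Fin 2) (ZMod ℓ))) := hG
  -- cardinality of the unit group
  have hunits : Nat.card (ZMod ℓ)ˣ = ℓ - 1 := by
    rw [Nat.card_eq_fintype_card, ZMod.card_units]
  -- the subtype in the statement
  set S := {A : GL (Fin 2) (ZMod ℓ) // A ∈ G ∧
      (Matrix.det ((A : Matrix (Fin 2) (Fin 2) (ZMod ℓ)) - 1) = 0 ∨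
       Matrix.det ((A : Matrix (Fin 2) (Fin 2) (ZMod ℓ)) + 1) = 0)} with hS
  have hclass : ∀ A : GL (Fin 2) (ZMod ℓ), A ∈ G →
      (Matrix.det ((A : Matrix (Fin 2) (Fin 2) (ZMod ℓ)) - 1) = 0 ∨
       Matrix.det ((A : Matrix (Fin 2) (Fin 2) (ZMod ℓ)) + 1) = 0) →
      ((A : Matrix (Fin 2) (Fin 2) (ZMod ℓ)) = 1 ∨
       (A : Matrix (Fin 2) (Fin 2) (ZMod ℓ)) = -1) ∨
      (((A : Matrix (Fin 2) (Fin 2) (ZMod ℓ)) * f δ = -(f δ * A)) ∧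
        Matrix.det (A : Matrix (Fin 2) (Fin 2) (ZMod ℓ)) = -1) :=
    fun A hA he => classify f hf hodd δ hδ0 hδl A (hG' hA) he
  by_cases hex : ∃ g₀ : GL (Fin 2) (ZMod ℓ), g₀ ∈ G ∧
      ((g₀ : Matrix (Fin 2) (Fin 2) (ZMod ℓ)) * f δ = -(f δ * g₀)) ∧
      Matrix.det (g₀ : Matrix (Fin 2) (Fin 2) (ZMod ℓ)) = -1
  · obtain ⟨g₀, hg₀G, hg₀a, hg₀d⟩ := hex
    set Hsub : Subgroup (GL (Fin 2) (ZMod ℓ)) := G ⊓ Tor f with hHsub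
    set dH : Hsub →* (ZMod ℓ)ˣ :=
      (Matrix.GeneralLinearGroup.det).comp Hsub.subtype with hdHdef
    set k := Nat.card dH.range with hk
    set c := Nat.card dH.ker with hc
    have hHcard : Nat.card Hsub = k * c := by
      rw [Subgroup.card_eq_card_quotient_mul_card_subgroup dH.ker]
      congr 1
      exact Nat.card_congr (QuotientGroup.quotientKerEquivRange dH).toEquiv
    -- the commuting part of G is G ⊓ T
    have e3 : {g : G // ((g : GL (Fin 2) (ZMod ℓ)) : Matrix (Fin 2) (Fin 2) (ZMod ℓ)) * f δ
        = f δ * ((g : GL (Fin 2) (ZMod ℓ)) : Matrix (Fin 2) (Fin 2) (ZMod ℓ))} ≃ Hsub :=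
      { toFun := fun g => ⟨(g : G), Subgroup.mem_inf.mpr
          ⟨(g : G).2, commute_mem_T f hf hodd δ hδ0 hδl _ g.2⟩⟩
        invFun := fun h => ⟨⟨(h : GL (Fin 2) (ZMod ℓ)), (Subgroup.mem_inf.mp h.2).1⟩,
          mem_T_commute f δ _ (Subgroup.mem_inf.mp h.2).2⟩
        left_inv := fun g => rfl
        right_inv := fun h => rfl }
    -- multiplication by g₀ swaps commuting and non-commuting parts
    have e2 : {g : G // ((g : GL (Fin 2) (ZMod ℓ)) : Matrix (Fin 2) (Fin 2) (ZMod ℓ)) * f δ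
          = f δ * ((g : GL (Fin 2) (ZMod ℓ)) : Matrix (Fin 2) (Fin 2) (ZMod ℓ))} ≃
        {g : G // ¬ (((g : GL (Fin 2) (ZMod ℓ)) : Matrix (Fin 2) (Fin 2) (ZMod ℓ)) * f δ
          = f δ * ((g : GL (Fin 2) (ZMod ℓ)) : Matrix (Fin 2) (Fin 2) (ZMod ℓ)))} :=
      { toFun := fun g => ⟨⟨g₀, hg₀G⟩ * (g : G), by
          have hanti : ((g₀ * ((g : G) : GL (Fin 2) (ZMod ℓ)) : GL (Fin 2) (ZMod ℓ)) :
              Matrix (Fin 2) (Fin 2) (ZMod ℓ)) * f δ =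
              -(f δ * ((g₀ * ((g : G) : GL (Fin 2) (ZMod ℓ)) : GL (Fin 2) (ZMod ℓ)) :
                Matrix (Fin 2) (Fin 2) (ZMod ℓ))) := by
            have hX := g.2
            rw [Units.val_mul]
            calc ((g₀ : Matrix (Fin 2) (Fin 2) (ZMod ℓ)) *
                (((g : G) : GL (Fin 2) (ZMod ℓ)) : Matrix (Fin 2) (Fin 2) (ZMod ℓ))) * f δ
                = (g₀ : Matrix (Fin 2) (Fin 2) (ZMod ℓ)) *
                  ((((g : G) : GL (Fin 2) (ZMod ℓ)) : Matrix (Fin 2) (Fin 2) (ZMod ℓ)) * f δ) := by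
                  rw [mul_assoc]
            _ = ((g₀ : Matrix (Fin 2) (Fin 2) (ZMod ℓ)) * f δ) *
                  (((g : G) : GL (Fin 2) (ZMod ℓ)) : Matrix (Fin 2) (Fin 2) (ZMod ℓ)) := by
                  rw [hX, mul_assoc]
            _ = -((f δ * g₀) *
                  (((g : G) : GL (Fin 2) (ZMod ℓ)) : Matrix (Fin 2) (Fin 2) (ZMod ℓ))) := by
                  rw [hg₀a, neg_mul]
            _ = -(f δ * ((g₀ : Matrix (Fin 2) (Fin 2) (ZMod ℓ)) *
                  (((g : G) : GL (Fin 2) (ZMod ℓ)) : Matrix (Fin 2) (Fin 2) (ZMod ℓ)))) := by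
                  rw [mul_assoc]
          intro hcomm
          exact not_comm_anticomm f hf hodd δ hδ0 hδl _ hcomm hanti⟩
        invFun := fun g => ⟨⟨g₀, hg₀G⟩⁻¹ * (g : G), by
          have hanti := (dichotomy f hf hodd δ hδ0 hδl ((g : G) : GL (Fin 2) (ZMod ℓ))
            (hG' ((g : G)).2)).resolve_left g.2
          exact coset_prod f δ _ g₀ hanti hg₀a⟩
        left_inv := fun g => by
          refine Subtype.ext ?_
          show (⟨g₀, hg₀G⟩ : G)⁻¹ * ((⟨g₀, hg₀G⟩ : G) * (g : G)) = (g : G)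
          exact inv_mul_cancel_left _ _
        right_inv := fun g => by
          refine Subtype.ext ?_
          show (⟨g₀, hg₀G⟩ : G) * ((⟨g₀, hg₀G⟩ : G)⁻¹ * (g : G)) = (g : G)
          exact mul_inv_cancel_left _ _ }
    have hGsplit : Nat.card G = 2 * Nat.card Hsub := by
      have h1 : Nat.card G =
          Nat.card {g : G // ((g : GL (Fin 2) (ZMod ℓ)) : Matrix (Fin 2) (Fin 2) (ZMod ℓ)) * f δ
            = f δ * ((g : GL (Fin 2) (ZMod ℓ)) : Matrix (Fin 2) (Fin 2) (ZMod ℓ))} +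
          Nat.card {g : G // ¬ (((g : GL (Fin 2) (ZMod ℓ)) :
            Matrix (Fin 2) (Fin 2) (ZMod ℓ)) * f δ
            = f δ * ((g : GL (Fin 2) (ZMod ℓ)) : Matrix (Fin 2) (Fin 2) (ZMod ℓ)))} := by
        rw [← Nat.card_sum]
        exact Nat.card_congr (Equiv.sumCompl _).symm
      rw [h1, ← Nat.card_congr e2, Nat.card_congr e3]
      ring
    -- ℓ - 1 ≤ k + k
    have hlk : ℓ - 1 ≤ k + k := by
      rw [← hunits, ← Nat.card_sum]
      apply Nat.card_le_card_of_surjective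
        (Sum.elim (fun x : dH.range => (x : (ZMod ℓ)ˣ))
          (fun x : dH.range => Matrix.GeneralLinearGroup.det g₀ * (x : (ZMod ℓ)ˣ)))
      intro u
      obtain ⟨g, hg⟩ := hdet u
      simp only at hg
      by_cases hPg : ((g : GL (Fin 2) (ZMod ℓ)) : Matrix (Fin 2) (Fin 2) (ZMod ℓ)) * f δ
          = f δ * ((g : GL (Fin 2) (ZMod ℓ)) : Matrix (Fin 2) (Fin 2) (ZMod ℓ))
      · have hmem : (g : GL (Fin 2) (ZMod ℓ)) ∈ Hsub := Subgroup.mem_inf.mpr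
          ⟨g.2, commute_mem_T f hf hodd δ hδ0 hδl _ hPg⟩
        exact ⟨Sum.inl ⟨dH ⟨(g : GL (Fin 2) (ZMod ℓ)), hmem⟩, ⟨_, rfl⟩⟩, hg⟩
      · have hanti := (dichotomy f hf hodd δ hδ0 hδl ((g : GL (Fin 2) (ZMod ℓ)))
          (hG' g.2)).resolve_left hPg
        have hcm := coset_prod f δ ((g : GL (Fin 2) (ZMod ℓ))) g₀ hanti hg₀a
        have hmem : g₀⁻¹ * (g : GL (Fin 2) (ZMod ℓ)) ∈ Hsub := Subgroup.mem_inf.mpr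
          ⟨G.mul_mem (G.inv_mem hg₀G) g.2, commute_mem_T f hf hodd δ hδ0 hδl _ hcm⟩
        refine ⟨Sum.inr ⟨dH ⟨g₀⁻¹ * (g : GL (Fin 2) (ZMod ℓ)), hmem⟩, ⟨_, rfl⟩⟩, ?_⟩
        show Matrix.GeneralLinearGroup.det g₀ *
          dH ⟨g₀⁻¹ * (g : GL (Fin 2) (ZMod ℓ)), hmem⟩ = u
        have hval : dH ⟨g₀⁻¹ * (g : GL (Fin 2) (ZMod ℓ)), hmem⟩ =
            (Matrix.GeneralLinearGroup.det g₀)⁻¹ *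
              Matrix.GeneralLinearGroup.det (g : GL (Fin 2) (ZMod ℓ)) := by
          show Matrix.GeneralLinearGroup.det (g₀⁻¹ * (g : GL (Fin 2) (ZMod ℓ))) = _
          rw [_root_.map_mul, _root_.map_inv]
        rw [hval, ← hg, mul_inv_cancel_left]
    -- |S| ≤ c + c
    have hSc : Nat.card S ≤ c + c := by
      rw [← Nat.card_sum]
      have hdetg₀ : Matrix.GeneralLinearGroup.det g₀ = Units.mk0 (-1 : ZMod ℓ)
          (by intro h; exact one_ne_zero (neg_eq_zero.mp h)) := by
        apply Units.ext
        rw [Matrix.GeneralLinearGroup.val_det_apply]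
        exact hg₀d
      apply Nat.card_le_card_of_injective (fun A : S =>
        if h1 : ((A : GL (Fin 2) (ZMod ℓ)) : Matrix (Fin 2) (Fin 2) (ZMod ℓ)) = 1 then
          Sum.inl (⟨⟨1, Hsub.one_mem⟩, dH.map_one⟩ : dH.ker)
        else if h2 : ((A : GL (Fin 2) (ZMod ℓ)) : Matrix (Fin 2) (Fin 2) (ZMod ℓ)) = -1 then
          Sum.inl (⟨⟨-1, Subgroup.mem_inf.mpr
              ⟨(Units.ext h2 : (A : GL (Fin 2) (ZMod ℓ)) = -1) ▸ A.2.1, neg_one_mem_T f⟩⟩, by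
            apply Units.ext
            show ((Matrix.GeneralLinearGroup.det (-1 : GL (Fin 2) (ZMod ℓ)) : (ZMod ℓ)ˣ) :
              ZMod ℓ) = 1
            rw [Matrix.GeneralLinearGroup.val_det_apply, Units.val_neg, Units.val_one,
              Matrix.det_neg]
            simp⟩ : dH.ker)
        else
          Sum.inr (⟨⟨g₀⁻¹ * (A : GL (Fin 2) (ZMod ℓ)), by
            have hcl := (hclass (A : GL (Fin 2) (ZMod ℓ)) A.2.1 A.2.2).resolve_left
              (by rintro (h | h); exacts [h1 h, h2 h])
            exact Subgroup.mem_inf.mpr ⟨G.mul_mem (G.inv_mem hg₀G) A.2.1,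
              commute_mem_T f hf hodd δ hδ0 hδl _
                (coset_prod f δ (A : GL (Fin 2) (ZMod ℓ)) g₀ hcl.1 hg₀a)⟩⟩, by
            have hcl := (hclass (A : GL (Fin 2) (ZMod ℓ)) A.2.1 A.2.2).resolve_left
              (by rintro (h | h); exacts [h1 h, h2 h])
            show Matrix.GeneralLinearGroup.det (g₀⁻¹ * (A : GL (Fin 2) (ZMod ℓ))) = 1
            have hdA : Matrix.GeneralLinearGroup.det (A : GL (Fin 2) (ZMod ℓ)) =
                Matrix.GeneralLinearGroup.det g₀ := by
              apply Units.ext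
              rw [Matrix.GeneralLinearGroup.val_det_apply,
                Matrix.GeneralLinearGroup.val_det_apply, hcl.2, hg₀d]
            rw [_root_.map_mul, _root_.map_inv, hdA, inv_mul_cancel]⟩ : dH.ker))
      intro a b hab
      by_cases h1a : ((a : GL (Fin 2) (ZMod ℓ)) : Matrix (Fin 2) (Fin 2) (ZMod ℓ)) = 1 <;>
        by_cases h1b : ((b : GL (Fin 2) (ZMod ℓ)) : Matrix (Fin 2) (Fin 2) (ZMod ℓ)) = 1
      · exact Subtype.ext (Units.ext (h1a.trans h1b.symm))
      · exfalso
        simp only [dif_pos h1a, dif_neg h1b] at hab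
        by_cases h2b : ((b : GL (Fin 2) (ZMod ℓ)) : Matrix (Fin 2) (Fin 2) (ZMod ℓ)) = -1
        · simp only [dif_pos h2b] at hab
          have := congrArg (fun z => (Sum.elim (fun w : dH.ker => ((w : Hsub) :
            GL (Fin 2) (ZMod ℓ))) (fun w : dH.ker => ((w : Hsub) : GL (Fin 2) (ZMod ℓ))) z)) hab
          simp only [Sum.elim_inl] at this
          have hm := congrArg Units.val this
          simp only [Units.val_one, Units.val_neg] at hm
          exact one_ne_neg_one_mat hodd hm
        · simp only [dif_neg h2b] at hab
          simp at hab
      · exfalso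
        simp only [dif_pos h1b, dif_neg h1a] at hab
        by_cases h2a : ((a : GL (Fin 2) (ZMod ℓ)) : Matrix (Fin 2) (Fin 2) (ZMod ℓ)) = -1
        · simp only [dif_pos h2a] at hab
          have := congrArg (fun z => (Sum.elim (fun w : dH.ker => ((w : Hsub) :
            GL (Fin 2) (ZMod ℓ))) (fun w : dH.ker => ((w : Hsub) : GL (Fin 2) (ZMod ℓ))) z)) hab
          simp only [Sum.elim_inl] at this
          have hm := congrArg Units.val this
          simp only [Units.val_one, Units.val_neg] at hm
          exact one_ne_neg_one_mat hodd hm.symm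
        · simp only [dif_neg h2a] at hab
          simp at hab
      · simp only [dif_neg h1a, dif_neg h1b] at hab
        by_cases h2a : ((a : GL (Fin 2) (ZMod ℓ)) : Matrix (Fin 2) (Fin 2) (ZMod ℓ)) = -1 <;>
          by_cases h2b : ((b : GL (Fin 2) (ZMod ℓ)) : Matrix (Fin 2) (Fin 2) (ZMod ℓ)) = -1
        · exact Subtype.ext (Units.ext (h2a.trans h2b.symm))
        · exfalso
          simp only [dif_pos h2a, dif_neg h2b] at hab
          simp at hab
        · exfalso
          simp only [dif_pos h2b, dif_neg h2a] at hab
          simp at hab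
        · simp only [dif_neg h2a, dif_neg h2b] at hab
          have := congrArg (fun z => (Sum.elim (fun w : dH.ker => ((w : Hsub) :
            GL (Fin 2) (ZMod ℓ))) (fun w : dH.ker => ((w : Hsub) : GL (Fin 2) (ZMod ℓ))) z)) hab
          simp only [Sum.elim_inr] at this
          have := mul_left_cancel (a := g₀⁻¹) this
          exact Subtype.ext this
    calc (ℓ - 1) * Nat.card S ≤ (k + k) * (c + c) := Nat.mul_le_mul hlk hSc
    _ = 2 * (2 * (k * c)) := by ring
    _ = 2 * (2 * Nat.card Hsub) := by rw [hHcard]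
    _ = 2 * Nat.card G := by rw [hGsplit]
  · -- no anticommuting element with det -1: S ⊆ {±1}
    have hpm : ∀ A : S, ((A : GL (Fin 2) (ZMod ℓ)) : Matrix (Fin 2) (Fin 2) (ZMod ℓ)) = 1 ∨
        ((A : GL (Fin 2) (ZMod ℓ)) : Matrix (Fin 2) (Fin 2) (ZMod ℓ)) = -1 := by
      intro A
      rcases hclass A.1 A.2.1 A.2.2 with h | h
      · exact h
      · exact absurd ⟨A.1, A.2.1, h.1, h.2⟩ hex
    have hcard2 : Nat.card S ≤ 2 := by
      have hinj : Function.Injective (fun A : S =>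
          (((A : GL (Fin 2) (ZMod ℓ)) : Matrix (Fin 2) (Fin 2) (ZMod ℓ)) = 1 : Bool)) := by
        intro a b hab
        simp only [decide_eq_decide] at hab
        rcases hpm a with ha | ha <;> rcases hpm b with hb | hb
        · exact Subtype.ext (Units.ext (ha.trans hb.symm))
        · rw [ha, hb] at hab
          simp at hab
          exact absurd hab.symm (one_ne_neg_one_mat hodd)
        · rw [ha, hb] at hab
          simp at hab
          exact absurd hab.symm (one_ne_neg_one_mat hodd)
        · exact Subtype.ext (Units.ext (ha.trans hb.symm))
      calc Nat.card S ≤ Nat.card Bool := Nat.card_le_card_of_injective _ hinj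
      _ = 2 := by simp [Nat.card_eq_fintype_card]
    have hG1 : ℓ - 1 ≤ Nat.card G := by
      rw [← hunits]
      exact Nat.card_le_card_of_surjective _ hdet
    calc (ℓ - 1) * Nat.card S ≤ (ℓ - 1) * 2 := Nat.mul_le_mul_left _ hcard2
    _ = 2 * (ℓ - 1) := by ring
    _ ≤ 2 * Nat.card G := Nat.mul_le_mul_left _ hG1
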